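/- Let p ≥ 2, let (θ_s)_{s=1}^p be real numbers and (θ_{st})_{1 ≤ s < t ≤ p} be real numbers. Then the series Σ_{x ∈ ℕ^p} exp( Σ_{s=1}^p θ_s x_s + Σ_{1 ≤ s < t ≤ p} θ_{st} x_s x_t − Σ_{s=1}^p log(x_s!) ) converges (i.e. the Poisson graphical model log-partition function A(θ) is finite) if and only if θ_{st} ≤ 0 for all 1 ≤ s < t ≤ p. -/

import Mathlib

open Finset

set_option maxHeartbeats 1000000 in
lemma aux_summable_pi_prod : ∀ (n : ℕ) (f : Fin n → ℕ → ℝ),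
    (∀ i m, 0 ≤ f i m) → (∀ i, Summable (f i)) →
    Summable (fun x : Fin n → ℕ => ∏ i, f i (x i)) := by
  intro n
  induction n with
  | zero =>
    intro f _ _
    simp only [Finset.univ_eq_empty, Finset.prod_empty]
    exact summable_of_finite_support (Set.toFinite _)
  | succ n ih =>
    intro f h0 hs
    have key : Summable (fun q : ℕ × (Fin n → ℕ) =>
        f 0 q.1 * ∏ i : Fin n, f i.succ (q.2 i)) :=
      by
        have hg : Summable (fun y : Fin n → ℕ => ∏ i : Fin n, f i.succ (y i)) :=
          ih (fun i => f i.succ) (fun i m => h0 _ m) (fun i => hs _)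
        apply Summable.mul_of_nonneg (hs 0) hg
        · intro m
          exact h0 0 m
        · intro y
          exact Finset.prod_nonneg fun i _ => h0 _ _
    have hcomp : ((fun x : Fin (n + 1) → ℕ => ∏ i, f i (x i)) ∘
        ⇑(Fin.consEquiv (fun _ : Fin (n + 1) => ℕ))) =
        fun q : ℕ × (Fin n → ℕ) => f 0 q.1 * ∏ i : Fin n, f i.succ (q.2 i) := by
      funext q
      simp only [Function.comp_apply, Fin.consEquiv_apply, Fin.prod_univ_succ,
        Fin.cons_zero, Fin.cons_succ]
    exact (Fin.consEquiv (fun _ : Fin (n + 1) => ℕ)).summable_iff.mp (hcomp ▸ key)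

set_option maxHeartbeats 1000000 in
/-- Normalizability of the Poisson graphical model: the partition sum
`Σ_{x ∈ ℕ^p} exp(Σ_s θ_s x_s + Σ_{s<t} θ_{st} x_s x_t - Σ_s log(x_s!))` is
finite if and only if all pairwise parameters `θ_{st}` (for `s < t`) are
nonpositive. -/
theorem poisson_graphical_model_normalizable_iff
    {p : ℕ} (hp : 2 ≤ p) (θ : Fin p → ℝ) (θ₂ : Fin p → Fin p → ℝ) :
    Summable (fun x : Fin p → ℕ =>
      Real.exp (∑ s, θ s * (x s : ℝ) +
        ∑ s, ∑ t ∈ Finset.Ioi s, θ₂ s t * (x s : ℝ) * (x t : ℝ) -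
        ∑ s, Real.log (Nat.factorial (x s)))) ↔
    ∀ s t : Fin p, s < t → θ₂ s t ≤ 0 := by
  constructor
  · -- summable → nonpositive interactions
    intro hsum s t hst
    by_contra hpos
    push_neg at hpos
    set c := θ₂ s t with hc
    -- injective family: x_s = x_t = n, rest 0
    set g : ℕ → (Fin p → ℕ) := fun n u => if u = s ∨ u = t then n else 0 with hg
    have hginj : Function.Injective g := by
      intro a b hab
      have := congrFun hab s
      simpa [hg] using this
    have hgs : ∀ n, g n s = n := fun n => by simp [hg]
    have hgt : ∀ n, g n t = n := fun n => by simp [hg]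
    have hgo : ∀ n u, u ≠ s → u ≠ t → g n u = 0 := fun n u h1 h2 => by
      simp [hg, h1, h2]
    have hsum2 := hsum.comp_injective hginj
    -- compute the exponent along g
    have hexp : ∀ n : ℕ,
        (∑ u, θ u * ((g n u : ℕ) : ℝ) +
          ∑ u, ∑ v ∈ Finset.Ioi u, θ₂ u v * ((g n u : ℕ) : ℝ) * ((g n v : ℕ) : ℝ) -
          ∑ u, Real.log (Nat.factorial (g n u)))
        = (θ s + θ t) * n + c * n * n - 2 * Real.log (Nat.factorial n) := by
      intro n
      have h1 : ∑ u, θ u * ((g n u : ℕ) : ℝ) = (θ s + θ t) * n := by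
        rw [← Finset.sum_subset (Finset.subset_univ ({s, t} : Finset (Fin p)))]
        · rw [Finset.sum_pair hst.ne, hgs, hgt]; ring
        · intro u _ hu
          simp only [Finset.mem_insert, Finset.mem_singleton, not_or] at hu
          rw [hgo n u hu.1 hu.2]
          simp
      have h2 : ∑ u, ∑ v ∈ Finset.Ioi u, θ₂ u v * ((g n u : ℕ) : ℝ) * ((g n v : ℕ) : ℝ)
          = c * n * n := by
        rw [← Finset.sum_subset (Finset.subset_univ ({s, t} : Finset (Fin p)))]
        · rw [Finset.sum_pair hst.ne]
          have hA : ∑ v ∈ Finset.Ioi s, θ₂ s v * ((g n s : ℕ) : ℝ) * ((g n v : ℕ) : ℝ)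
              = c * n * n := by
            rw [Finset.sum_eq_single t]
            · rw [hgs, hgt]
            · intro v hv hvt
              have hvs : v ≠ s := (Finset.mem_Ioi.mp hv).ne'
              rw [hgo n v hvs hvt]
              simp
            · intro h
              exact absurd (Finset.mem_Ioi.mpr hst) h
          have hB : ∑ v ∈ Finset.Ioi t, θ₂ t v * ((g n t : ℕ) : ℝ) * ((g n v : ℕ) : ℝ)
              = 0 := by
            apply Finset.sum_eq_zero
            intro v hv
            have h1 : v ≠ t := (Finset.mem_Ioi.mp hv).ne'
            have h2 : v ≠ s := (hst.trans (Finset.mem_Ioi.mp hv)).ne'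
            rw [hgo n v h2 h1]
            simp
          rw [hA, hB, add_zero]
        · intro u _ hu
          simp only [Finset.mem_insert, Finset.mem_singleton, not_or] at hu
          apply Finset.sum_eq_zero
          intro v _
          rw [hgo n u hu.1 hu.2]
          simp
      have h3 : ∑ u, Real.log (Nat.factorial (g n u))
          = 2 * Real.log (Nat.factorial n) := by
        rw [← Finset.sum_subset (Finset.subset_univ ({s, t} : Finset (Fin p)))]
        · rw [Finset.sum_pair hst.ne, hgs, hgt]; ring
        · intro u _ hu
          simp only [Finset.mem_insert, Finset.mem_singleton, not_or] at hu
          rw [hgo n u hu.1 hu.2]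
          simp
      rw [h1, h2, h3]
    -- the exponent tends to infinity
    have hcpos : (0 : ℝ) < c := hpos
    have hEtop : Filter.Tendsto
        (fun n : ℕ => (θ s + θ t) * n + c * n * n - 2 * Real.log (Nat.factorial n))
        Filter.atTop Filter.atTop := by
      have hlb : ∀ᶠ n : ℕ in Filter.atTop,
          (n : ℝ) * ((θ s + θ t) + (c / 2) * n) ≤
          (θ s + θ t) * n + c * n * n - 2 * Real.log (Nat.factorial n) := by
        have hlog : ∀ᶠ x : ℝ in Filter.atTop, ‖Real.log x‖ ≤ (c / 4) * ‖x‖ :=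
          Real.isLittleO_log_id_atTop.def (by linarith)
        have hlogn : ∀ᶠ n : ℕ in Filter.atTop, Real.log n ≤ (c / 4) * n := by
          filter_upwards [tendsto_natCast_atTop_atTop.eventually hlog,
            Filter.eventually_ge_atTop 1] with n hn hn1
          have : |Real.log (n : ℝ)| ≤ (c / 4) * |(n : ℝ)| := by simpa using hn
          calc Real.log n ≤ |Real.log n| := le_abs_self _
            _ ≤ (c / 4) * |(n : ℝ)| := this
            _ = (c / 4) * n := by rw [abs_of_nonneg (by positivity)]
        filter_upwards [hlogn, Filter.eventually_ge_atTop 1] with n hn hn1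
        have hfact : Real.log (Nat.factorial n) ≤ n * Real.log n := by
          have h1 : (Nat.factorial n : ℝ) ≤ (n : ℝ) ^ n := by
            exact_mod_cast Nat.factorial_le_pow n
          calc Real.log (Nat.factorial n) ≤ Real.log ((n : ℝ) ^ n) :=
                Real.log_le_log (by exact_mod_cast Nat.factorial_pos n) h1
            _ = n * Real.log n := by rw [Real.log_pow]
        have hnn : (0 : ℝ) ≤ n := Nat.cast_nonneg n
        have hkey : 2 * Real.log (Nat.factorial n) ≤ (c / 2) * n * n := by
          calc 2 * Real.log (Nat.factorial n) ≤ 2 * (n * Real.log n) := by linarith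
            _ ≤ 2 * (n * ((c / 4) * n)) := by
                have := mul_le_mul_of_nonneg_left hn hnn
                linarith
            _ = (c / 2) * n * n := by ring
        nlinarith
      exact Filter.tendsto_atTop_mono' _ hlb
        (Filter.Tendsto.atTop_mul_atTop₀ tendsto_natCast_atTop_atTop
          (Filter.tendsto_atTop_add_const_left _ _
            ((Filter.tendsto_const_mul_atTop_of_pos (by linarith)).mpr
              tendsto_natCast_atTop_atTop)))
    have htop : Filter.Tendsto (fun n : ℕ =>
        Real.exp (∑ u, θ u * ((g n u : ℕ) : ℝ) +
          ∑ u, ∑ v ∈ Finset.Ioi u, θ₂ u v * ((g n u : ℕ) : ℝ) * ((g n v : ℕ) : ℝ) -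
          ∑ u, Real.log (Nat.factorial (g n u)))) Filter.atTop Filter.atTop := by
      have : (fun n : ℕ =>
          Real.exp (∑ u, θ u * ((g n u : ℕ) : ℝ) +
            ∑ u, ∑ v ∈ Finset.Ioi u, θ₂ u v * ((g n u : ℕ) : ℝ) * ((g n v : ℕ) : ℝ) -
            ∑ u, Real.log (Nat.factorial (g n u)))) =
          fun n : ℕ => Real.exp ((θ s + θ t) * n + c * n * n -
            2 * Real.log (Nat.factorial n)) := by
        funext n; rw [hexp n]
      rw [this]
      exact Real.tendsto_exp_atTop.comp hEtop
    have hzero := hsum2.tendsto_atTop_zero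
    have h1 : ∀ᶠ n : ℕ in Filter.atTop, (1 : ℝ) ≤ _ := htop.eventually_ge_atTop 1
    have h2 := hzero.eventually (gt_mem_nhds (show (0:ℝ) < 1 by norm_num))
    rcases (h1.and h2).exists with ⟨n, hn1, hn2⟩
    exact absurd (lt_of_le_of_lt hn1 hn2) (lt_irrefl _)
  · -- nonpositive interactions → summable
    intro hneg
    have hprod : Summable (fun x : Fin p → ℕ =>
        ∏ s, Real.exp (θ s * (x s : ℝ)) / Nat.factorial (x s)) := by
      apply aux_summable_pi_prod p
        (fun s m => Real.exp (θ s * (m : ℝ)) / Nat.factorial m)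
      · intro i m
        positivity
      · intro i
        have : (fun m : ℕ => Real.exp (θ i * (m : ℝ)) / Nat.factorial m) =
            fun m : ℕ => (Real.exp (θ i)) ^ m / Nat.factorial m := by
          funext m
          rw [← Real.exp_nat_mul, mul_comm]
        rw [this]
        exact Real.summable_pow_div_factorial _
    apply Summable.of_nonneg_of_le (fun x => (Real.exp_pos _).le) _ hprod
    intro x
    have hB : ∑ s, ∑ t ∈ Finset.Ioi s, θ₂ s t * (x s : ℝ) * (x t : ℝ) ≤ 0 := by
      apply Finset.sum_nonpos
      intro s _
      apply Finset.sum_nonpos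
      intro t ht
      have := hneg s t (Finset.mem_Ioi.mp ht)
      have h1 : (0:ℝ) ≤ (x s : ℝ) := Nat.cast_nonneg _
      have h2 : (0:ℝ) ≤ (x t : ℝ) := Nat.cast_nonneg _
      calc θ₂ s t * (x s : ℝ) * (x t : ℝ) = θ₂ s t * ((x s : ℝ) * (x t : ℝ)) :=
            mul_assoc _ _ _
        _ ≤ 0 := mul_nonpos_iff.mpr (Or.inr ⟨this, mul_nonneg h1 h2⟩)
    calc Real.exp (∑ s, θ s * (x s : ℝ) +
          ∑ s, ∑ t ∈ Finset.Ioi s, θ₂ s t * (x s : ℝ) * (x t : ℝ) -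
          ∑ s, Real.log (Nat.factorial (x s)))
        ≤ Real.exp (∑ s, θ s * (x s : ℝ) - ∑ s, Real.log (Nat.factorial (x s))) := by
          apply Real.exp_le_exp.mpr
          linarith
      _ = ∏ s, Real.exp (θ s * (x s : ℝ)) / Nat.factorial (x s) := by
          rw [← Finset.sum_sub_distrib, Real.exp_sum]
          apply Finset.prod_congr rfl
          intro s _
          rw [Real.exp_sub, Real.exp_log (by exact_mod_cast Nat.factorial_pos (x s))]
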